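/- Let f ∈ ℂ[x₁,…,xₙ] be a nonconstant squarefree polynomial. Then there exists a vector v = (v₁,…,vₙ) ∈ ℂⁿ such that f and the directional derivative D_v f = Σᵢ vᵢ ∂f/∂xᵢ have no common nonconstant factor (i.e., they are coprime in ℂ[x₁,…,xₙ]). -/

import Mathlib

open MvPolynomial

section Aux

variable {σ : Type*} {R : Type*}

lemma aux_degree_totalDegree [CommSemiring R] {p : MvPolynomial σ R} {d : σ →₀ ℕ}
    (hd : d ∈ p.support) : d.degree ≤ p.totalDegree := by
  have := le_totalDegree hd
  simpa [Finsupp.degree_apply, Finsupp.sum] using this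

lemma aux_homogeneousComponent_totalDegree_ne_zero [CommSemiring R]
    {p : MvPolynomial σ R} (hp : p ≠ 0) :
    homogeneousComponent p.totalDegree p ≠ 0 := by
  obtain ⟨d, hd, hdeg⟩ := p.support.exists_mem_eq_sup (support_nonempty.mpr hp)
    (fun s => s.sum fun _ e => e)
  have hdeg' : d.degree = p.totalDegree := by
    rw [totalDegree, hdeg]; simp [Finsupp.degree_apply, Finsupp.sum]
  intro h
  have := coeff_homogeneousComponent (σ := σ) p.totalDegree p d
  rw [h, if_pos hdeg'] at this
  exact (mem_support_iff.mp hd) (by simpa using this.symm)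

lemma aux_coeff_zero_of_degree_gt [CommSemiring R] {p : MvPolynomial σ R} {d : σ →₀ ℕ}
    (h : p.totalDegree < d.degree) : coeff d p = 0 := by
  apply coeff_eq_zero_of_totalDegree_lt
  simpa [Finsupp.degree_apply] using h

lemma aux_homogeneousComponent_top_mul [CommRing R] (p q : MvPolynomial σ R) :
    homogeneousComponent (p.totalDegree + q.totalDegree) (p * q)
      = homogeneousComponent p.totalDegree p * homogeneousComponent q.totalDegree q := by
  classical
  set a := p.totalDegree
  set b := q.totalDegree
  ext d
  rw [coeff_homogeneousComponent, coeff_mul, coeff_mul]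
  have key : ∀ x ∈ Finset.HasAntidiagonal.antidiagonal d,
      coeff x.1 (homogeneousComponent a p) * coeff x.2 (homogeneousComponent b q)
        = if x.1.degree = a ∧ x.2.degree = b then coeff x.1 p * coeff x.2 q else 0 := by
    intro x hx
    rw [coeff_homogeneousComponent, coeff_homogeneousComponent]
    by_cases h1 : x.1.degree = a <;> by_cases h2 : x.2.degree = b <;> simp [h1, h2]
  rw [Finset.sum_congr rfl key]
  by_cases hd : d.degree = a + b
  · rw [if_pos hd]
    refine Finset.sum_congr rfl fun x hx => ?_
    have hsum : x.1.degree + x.2.degree = a + b := by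
      rw [← hd, ← Finset.HasAntidiagonal.mem_antidiagonal.mp hx]
      simp [Finsupp.degree_eq_weight_one, map_add]
    by_cases h1 : x.1.degree = a
    · have h2 : x.2.degree = b := by omega
      rw [if_pos ⟨h1, h2⟩]
    · rw [if_neg (by tauto)]
      rcases lt_or_gt_of_ne h1 with hlt | hgt
      · have : b < x.2.degree := by omega
        rw [aux_coeff_zero_of_degree_gt this, mul_zero]
      · rw [aux_coeff_zero_of_degree_gt hgt, zero_mul]
  · rw [if_neg hd]
    symm
    apply Finset.sum_eq_zero
    intro x hx
    rw [if_neg]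
    rintro ⟨h1, h2⟩
    apply hd
    rw [← Finset.HasAntidiagonal.mem_antidiagonal.mp hx]
    rw [Finsupp.degree_eq_weight_one] at h1 h2
    simp [Finsupp.degree_eq_weight_one, map_add, h1, h2]


lemma aux_totalDegree_mul_eq [CommRing R] [IsDomain R] {p q : MvPolynomial σ R}
    (hp : p ≠ 0) (hq : q ≠ 0) :
    (p * q).totalDegree = p.totalDegree + q.totalDegree := by
  refine le_antisymm (totalDegree_mul p q) ?_
  by_contra hlt
  push_neg at hlt
  have h0 : homogeneousComponent (p.totalDegree + q.totalDegree) (p * q) = 0 :=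
    homogeneousComponent_eq_zero _ _ hlt
  rw [aux_homogeneousComponent_top_mul] at h0
  exact mul_ne_zero (aux_homogeneousComponent_totalDegree_ne_zero hp)
    (aux_homogeneousComponent_totalDegree_ne_zero hq) h0

end Aux
section Aux2

variable {σ : Type*} {R : Type*}

lemma aux_degree_single_one (i : σ) : (Finsupp.single i 1 : σ →₀ ℕ).degree = 1 := by
  simp [Finsupp.degree_apply, Finsupp.support_single_ne_zero _ one_ne_zero]

lemma aux_degree_add (u v : σ →₀ ℕ) : (u + v).degree = u.degree + v.degree := by
  simp [Finsupp.degree_eq_weight_one, map_add]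

lemma aux_coeff_pderiv [CommRing R] [DecidableEq σ] (i : σ) (f : MvPolynomial σ R) (d : σ →₀ ℕ) :
    coeff d (pderiv i f) = (d i + 1 : ℕ) * coeff (d + Finsupp.single i 1) f := by
  induction f using MvPolynomial.induction_on' with
  | add p q hp hq => simp [hp, hq, mul_add]
  | monomial s a =>
    rw [pderiv_monomial, coeff_monomial, coeff_monomial]
    by_cases h : s = d + Finsupp.single i 1
    · have hsi : s i = d i + 1 := by simp [h]
      have hsub : s - Finsupp.single i 1 = d := by
        rw [h]; exact add_tsub_cancel_right d _
      rw [if_pos hsub, if_pos h, hsi]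
      push_cast
      ring
    · rw [if_neg h, mul_zero]
      by_cases hsi : s i = 0
      · by_cases hsub : s - Finsupp.single i 1 = d
        · rw [if_pos hsub, hsi]; simp
        · rw [if_neg hsub]
      · rw [if_neg]
        intro hsub
        apply h
        rw [← hsub, tsub_add_cancel_of_le]
        exact Finsupp.single_le_iff.mpr (Nat.one_le_iff_ne_zero.mpr hsi)

lemma aux_degree_sub_single {s : σ →₀ ℕ} {i : σ} (h : s i ≠ 0) :
    (s - Finsupp.single i 1).degree + 1 = s.degree := by
  classical
  have hle : Finsupp.single i 1 ≤ s := Finsupp.single_le_iff.mpr (Nat.one_le_iff_ne_zero.mpr h)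
  have := tsub_add_cancel_of_le hle
  calc (s - Finsupp.single i 1).degree + 1
      = (s - Finsupp.single i 1).degree + (Finsupp.single i 1).degree := by
        simp [Finsupp.degree_apply, Finsupp.support_single_ne_zero _ (one_ne_zero)]
    _ = s.degree := by
        rw [Finsupp.degree_eq_weight_one] at *
        rw [← map_add, this]

lemma aux_totalDegree_pderiv_lt [CommRing R] [DecidableEq σ] {f : MvPolynomial σ R}
    (hf : f.totalDegree ≠ 0) (i : σ) :
    (pderiv i f).totalDegree < f.totalDegree := by
  rw [Nat.lt_iff_le_pred (Nat.pos_of_ne_zero hf)]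
  by_cases hz : pderiv i f = 0
  · simp [hz]
  rw [MvPolynomial.totalDegree]
  apply Finset.sup_le
  intro d hd
  rw [mem_support_iff, aux_coeff_pderiv] at hd
  have hcoeff : coeff (d + Finsupp.single i 1) f ≠ 0 := by
    intro h0; rw [h0, mul_zero] at hd; exact hd rfl
  have hmem : (d + Finsupp.single i 1) ∈ f.support := mem_support_iff.mpr hcoeff
  have hle : (d + Finsupp.single i 1).degree ≤ f.totalDegree := by
    have := le_totalDegree hmem
    simpa [Finsupp.degree_apply, Finsupp.sum] using this
  have hdd : (d + Finsupp.single i 1).degree = d.degree + 1 := by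
    rw [aux_degree_add, aux_degree_single_one]
  have : (d.sum fun _ e => e) = d.degree := by simp [Finsupp.degree_apply, Finsupp.sum]
  omega

-- char zero: all pderivs vanish → constant
lemma aux_totalDegree_eq_zero_of_pderiv [CommRing R] [NoZeroDivisors R] [CharZero R] {f : MvPolynomial σ R}
    (h : ∀ i : σ, pderiv i f = 0) : f.totalDegree = 0 := by
  classical
  by_contra hne
  obtain ⟨d, hd, hdeg⟩ := f.support.exists_mem_eq_sup (support_nonempty.mpr (by
    intro h0; exact hne (by simp [h0]))) (fun s => s.sum fun _ e => e)
  have hddeg : d.degree ≠ 0 := by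
    intro h0
    apply hne
    rw [totalDegree, hdeg]
    simpa [Finsupp.degree_apply, Finsupp.sum] using h0
  obtain ⟨i, hi⟩ : ∃ i, d i ≠ 0 := by
    by_contra hall
    push_neg at hall
    exact hddeg (Finset.sum_eq_zero fun j _ => hall j)
  have hc := aux_coeff_pderiv i f (d - Finsupp.single i 1)
  rw [h i] at hc
  have hrec : (d - Finsupp.single i 1) + Finsupp.single i 1 = d :=
    tsub_add_cancel_of_le (Finsupp.single_le_iff.mpr (Nat.one_le_iff_ne_zero.mpr hi))
  rw [hrec] at hc
  have : coeff d f = 0 := by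
    have hcast : ((d - Finsupp.single i 1 : σ →₀ ℕ) i + 1 : ℕ) ≠ 0 := by omega
    have := hc.symm
    simp only [coeff_zero] at this
    exact (mul_eq_zero.mp this).resolve_left (by exact_mod_cast hcast)
  exact mem_support_iff.mp hd this

end Aux2
section Main

open UniqueFactorizationMonoid

variable {n : ℕ}

lemma aux_eq_C_of_totalDegree_eq_zero {σ R : Type*} [CommSemiring R]
    {p : MvPolynomial σ R} (h : p.totalDegree = 0) : p = C (coeff 0 p) := by
  classical
  ext m
  by_cases hm : m = 0
  · simp [hm]
  · rw [coeff_C, if_neg (Ne.symm hm)]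
    by_contra hc
    obtain ⟨x, hx⟩ : ∃ x, m x ≠ 0 := by
      by_contra hall; push_neg at hall; exact hm (Finsupp.ext hall)
    exact hx ((totalDegree_eq_zero_iff σ p).mp h m (mem_support_iff.mpr hc) x)

lemma aux_not_prime_of_totalDegree_eq_zero {p : MvPolynomial (Fin n) ℂ}
    (h : p.totalDegree = 0) (hp : Prime p) : False := by
  have hC := aux_eq_C_of_totalDegree_eq_zero h
  have hc0 : coeff 0 p ≠ 0 := by
    intro h0; rw [h0, map_zero] at hC; exact hp.ne_zero hC
  exact hp.not_unit (hC ▸ (isUnit_iff_ne_zero.mpr hc0).map (C : ℂ →+* _))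

lemma aux_pderiv_eq_zero_of_prime_dvd {p : MvPolynomial (Fin n) ℂ} (hp : Prime p)
    {i : Fin n} (h : p ∣ pderiv i p) : pderiv i p = 0 := by
  by_contra hz
  have htd : p.totalDegree ≠ 0 := fun h0 => aux_not_prime_of_totalDegree_eq_zero h0 hp
  obtain ⟨g, hg⟩ := h
  have hg0 : g ≠ 0 := by rintro rfl; rw [mul_zero] at hg; exact hz hg
  have h1 : (pderiv i p).totalDegree = p.totalDegree + g.totalDegree := by
    rw [hg]; exact aux_totalDegree_mul_eq hp.ne_zero hg0
  have h2 := aux_totalDegree_pderiv_lt htd i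
  omega

lemma aux_exists_pderiv_not_dvd {f p : MvPolynomial (Fin n) ℂ}
    (hsq : Squarefree f) (hp : Prime p) (hpf : p ∣ f) : ∃ i, ¬ p ∣ pderiv i f := by
  by_contra hall
  push_neg at hall
  obtain ⟨g, hg⟩ := hpf
  have hpg : ¬ p ∣ g := by
    rintro ⟨h, hh⟩
    exact hp.not_unit (hsq p ⟨h, by rw [hg, hh, ← mul_assoc]⟩)
  have hkey : ∀ i, pderiv i p = 0 := by
    intro i
    apply aux_pderiv_eq_zero_of_prime_dvd hp
    have hdvd : p ∣ pderiv i p * g := by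
      have h1 : p ∣ pderiv i f := hall i
      have h2 : pderiv i f = pderiv i p * g + p * pderiv i g := by
        rw [hg, pderiv_mul]
      have h4 : pderiv i p * g = pderiv i f - p * pderiv i g := by
        rw [h2, add_sub_cancel_right]
      rw [h4]
      exact dvd_sub h1 (dvd_mul_right p (pderiv i g))
    exact (hp.dvd_mul.mp hdvd).resolve_right hpg
  exact aux_not_prime_of_totalDegree_eq_zero (aux_totalDegree_eq_zero_of_pderiv hkey) hp

/-- the set of directions `v` whose directional derivative of `f` is divisible by `p`,
as a subspace. -/
noncomputable def auxW (n : ℕ) (f p : MvPolynomial (Fin n) ℂ) : Submodule ℂ (Fin n → ℂ) where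
  carrier := {v | p ∣ ∑ i, C (v i) * pderiv i f}
  zero_mem' := by simp
  add_mem' := by
    intro a b ha hb
    simp only [Set.mem_setOf_eq, Pi.add_apply, map_add, add_mul,
      Finset.sum_add_distrib] at *
    exact dvd_add ha hb
  smul_mem' := by
    intro c v hv
    simp only [Set.mem_setOf_eq, Pi.smul_apply, smul_eq_mul, map_mul, mul_assoc,
      ← Finset.mul_sum] at *
    exact hv.mul_left _

lemma aux_sum_single (f : MvPolynomial (Fin n) ℂ) (i : Fin n) :
    ∑ j, C ((Pi.single i 1 : Fin n → ℂ) j) * pderiv j f = pderiv i f := by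
  rw [Finset.sum_eq_single i]
  · simp
  · intro j _ hj
    simp [Pi.single_eq_of_ne hj]
  · simp

theorem exists_direction_coprime_directional_derivative
    (n : ℕ) (f : MvPolynomial (Fin n) ℂ)
    (hf_nonconst : f.totalDegree ≠ 0) (hf_sqfree : Squarefree f) :
    ∃ v : Fin n → ℂ,
      ∀ d : MvPolynomial (Fin n) ℂ,
        d ∣ f → d ∣ (∑ i, C (v i) * pderiv i f) → IsUnit d := by
  classical
  have hf0 : f ≠ 0 := fun h => hf_nonconst (by simp [h])
  set S := (factors f).toFinset with hS
  set T : Finset (Submodule ℂ (Fin n → ℂ)) := S.image (auxW n f) with hT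
  have htop : ⊤ ∉ T := by
    rw [hT]
    simp only [Finset.mem_image]
    rintro ⟨p, hp, hW⟩
    have hp' := Multiset.mem_toFinset.mp hp
    have hprime := prime_of_factor p hp'
    have hpf := dvd_of_mem_factors hp'
    obtain ⟨i, hi⟩ := aux_exists_pderiv_not_dvd hf_sqfree hprime hpf
    apply hi
    have hmem : (Pi.single i 1 : Fin n → ℂ) ∈ auxW n f p := by
      rw [hW]; exact Submodule.mem_top
    have : p ∣ ∑ j, C ((Pi.single i 1 : Fin n → ℂ) j) * pderiv j f := hmem
    rwa [aux_sum_single] at this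
  have hne := Subspace.biUnion_ne_univ_of_top_notMem htop
  obtain ⟨v, hv⟩ := Set.ne_univ_iff_exists_notMem _ |>.mp hne
  refine ⟨v, fun d hdf hdD => ?_⟩
  by_contra hunit
  have hd0 : d ≠ 0 := fun h => hf0 (zero_dvd_iff.mp (h ▸ hdf))
  obtain ⟨q, hqirr, hqd⟩ := WfDvdMonoid.exists_irreducible_factor hunit hd0
  obtain ⟨r, hrS, hqr⟩ := exists_mem_factors_of_dvd hf0 hqirr (hqd.trans hdf)
  have hrdvd : r ∣ ∑ i, C (v i) * pderiv i f :=
    (hqr.symm.dvd).trans (hqd.trans hdD)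
  apply hv
  refine Set.mem_biUnion (?_ : auxW n f r ∈ T) (hrdvd : v ∈ auxW n f r)
  exact Finset.mem_image_of_mem _ (Multiset.mem_toFinset.mpr hrS)

end Main
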